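/- For k ≥ r ≥ 3 and m, m' ≥ 0, let π be a partition in C_=(k,r|m). Then π is a partition in C_<(k,r|m') if and only if m < m'. -/

import Mathlib

namespace Bressoud

/-- A partition: a weakly decreasing list of positive integers. -/
structure Partition where
  parts : List ℕ
  pos : ∀ x ∈ parts, 0 < x
  sorted : parts.Pairwise (· ≥ ·)

namespace Partition

/-- `|π|`, the sum of the parts of `π`. -/
def size (π : Partition) : ℕ := π.parts.sum

/-- `ℓ(π)`, the number of parts of `π`. -/
def numParts (π : Partition) : ℕ := π.parts.length

end Partition

lemma exists_pos_not_mem (s : List ℕ) : ∃ n, 0 < n ∧ n ∉ s := by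
  refine ⟨s.sum + 1, Nat.succ_pos _, fun h => ?_⟩
  have := List.single_le_sum (l := s) (fun x _ => Nat.zero_le x) _ h
  omega

/-- The least positive integer not occurring in `s`. -/
def mex1 (s : List ℕ) : ℕ := Nat.find (exists_pos_not_mem s)

/-- Parts `p ≥ q` conflict (must receive different marks) when `p - q ≤ 2`,
with strict inequality when `p` is odd. -/
def conflict (p q : ℕ) : Bool :=
  if p % 2 = 1 then decide (p - q < 2) else decide (p - q ≤ 2)

/-- Greedy computation of the Göllnitz–Gordon marking: the parts are processed
from smallest to largest (second argument: remaining parts in increasing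
order; first argument: already processed parts with their marks), and each
part receives the least positive mark different from the marks of all already
processed conflicting parts. -/
def ggAux : List (ℕ × ℕ) → List ℕ → List (ℕ × ℕ)
  | acc, [] => acc
  | acc, p :: rest =>
      ggAux ((p, mex1 ((acc.filter fun q => conflict p q.1).map Prod.snd)) :: acc) rest

/-- The Göllnitz–Gordon marking `GG(π)` of `π`, as a list of (part, mark)
pairs in decreasing order of parts. -/
def ggMarks (π : Partition) : List (ℕ × ℕ) := ggAux [] π.parts.reverse

/-- There is an `m`-marked part equal to `x` in `GG(π)`. -/
def Marked (π : Partition) (x m : ℕ) : Prop := (x, m) ∈ ggMarks π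

instance (π : Partition) (x m : ℕ) : Decidable (Marked π x m) := by
  unfold Marked; infer_instance

/-- The `i`-th row of `GG(π)`: the `i`-marked parts, in decreasing order. -/
def row (π : Partition) (i : ℕ) : List ℕ :=
  ((ggMarks π).filter fun q => q.2 == i).map Prod.fst

/-- `N_i(π)`: the number of `i`-marked parts of `π`. -/
def Nmk (π : Partition) (i : ℕ) : ℕ := (row π i).length

/-- `π^{(i)}_j` as a natural number (meaningful for `1 ≤ j ≤ N_i(π)`;
junk value `0` otherwise). -/
def nth (π : Partition) (i j : ℕ) : ℕ := (row π i).getD (j - 1) 0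

/-- The canonical embedding of the natural numbers into `EReal`. -/
noncomputable def natE (n : ℕ) : EReal := ((n : ℝ) : EReal)

/-- `π^{(i)}_j` as an extended real, with the conventions `π^{(i)}_0 = +∞`
and `π^{(i)}_j = -∞` for `j > N_i(π)`. -/
noncomputable def rowVal (π : Partition) (i j : ℕ) : EReal :=
  if j = 0 then ⊤
  else
    match (row π i)[j - 1]? with
    | some x => natE x
    | none => ⊥

/-- The largest `l ≥ 0` such that there is no odd part of `π` greater than or
equal to `π^{(2)}_l` (the indices `1 ≤ j ≤ N₂(π)` with this property form an
initial segment, so this is also their number). -/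
def bigL (π : Partition) : ℕ :=
  ((List.range' 1 (Nmk π 2)).filter fun j =>
    decide (∀ x ∈ π.parts, x % 2 = 1 → x < nth π 2 j)).length

/-- `startPair π b = (starting type of π^{(2)}_b, s_b(π))` for `1 ≤ b ≤ N₂(π)`.
Starting types are encoded by integers: `-1` stands for `s₋₁`, and `0,1,2,3`
for `s₀,s₁,s₂,s₃`; the value `9` is a junk value used when no case applies. -/
def startPair (π : Partition) : ℕ → ℤ × ℕ
  | 0 => (9, 0)
  | b + 1 =>
    let v := nth π 2 (b + 1)
    if bigL π < b + 1 then (-1, 0)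
    else
      let okLow : Bool :=
        if b = 0 then !decide ((v + 2) ∈ π.parts)
        else !decide (Marked π (v + 2) 1) || decide ((startPair π b).2 = v + 2)
      let ok2 : Bool :=
        if b = 0 then decide (Marked π (v + 2) 1)
        else decide (Marked π (v + 2) 1) && !decide ((startPair π b).2 = v + 2)
      if decide (Marked π (v - 1) 1) && okLow then (0, v - 1)
      else if decide (Marked π (v - 2) 1) && okLow then (1, v - 2)
      else if ok2 then (2, v + 2)
      else if decide (Marked π v 1) then (3, v)
      else (9, 0)

/-- The starting type of `π^{(2)}_b`, encoded as an integer. -/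
def startType (π : Partition) (b : ℕ) : ℤ := (startPair π b).1

/-- The set `C(k,r)`: partitions with no repeated odd part, in which the parts
equal to `1` and `2` have marks at most `r - 1`, and whose Göllnitz–Gordon
marking has at most `k - 1` rows. -/
def C (k r : ℕ) : Set Partition :=
  { π | (∀ x, x % 2 = 1 → π.parts.count x ≤ 1) ∧
        (∀ x m, Marked π x m → x ≤ 2 → m ≤ r - 1) ∧
        (∀ x m, Marked π x m → m ≤ k - 1) }

/-- The set `C_<(k,r|p,t)`. -/
noncomputable def Clt (k r p t : ℕ) : Set Partition :=
  { π | π ∈ C k r ∧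
        (∀ x ∈ π.parts, x % 2 = 1 → x < 2 * t + 1) ∧
        rowVal π 2 (p + 1) < natE (2 * t + 1) ∧
        natE (2 * t + 1) < rowVal π 2 p ∧
        (rowVal π 2 p = natE (2 * t + 2) →
          startType π p = 2 ∨ startType π p = 3) ∧
        (rowVal π 2 (p + 1) = natE (2 * t) →
          startType π (p + 1) = 0 ∨ startType π (p + 1) = 1) }

/-- The set `C_=(k,r|p,t)`. -/
noncomputable def Ceq (k r p t : ℕ) : Set Partition :=
  { π | π ∈ C k r ∧
        (2 * t + 1) ∈ π.parts ∧
        (∀ x ∈ π.parts, x % 2 = 1 → x ≤ 2 * t + 1) ∧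
        (∀ m, Marked π (2 * t + 1) m → m ≤ 2) ∧
        natE (2 * t + 2) ≤ rowVal π 2 p ∧
        rowVal π 2 (p + 1) ≤ natE (2 * t + 2) ∧
        ((∃ j, 1 ≤ j ∧ j ≤ Nmk π 2 ∧ nth π 2 j = 2 * t + 2 ∧ startType π j = 0) →
          rowVal π 2 (p + 1) = natE (2 * t + 2) ∧
          ∃ i, 1 ≤ i ∧ i ≤ p + 1 ∧
            nth π 2 i = 2 * t + 2 + 4 * (p + 1 - i) ∧
            π.parts.count (2 * t + 2 + 4 * (p + 1 - i)) = 1) ∧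
        ((∃ j, 1 ≤ j ∧ j ≤ Nmk π 2 ∧ nth π 2 j = 2 * t + 2 ∧ startType π j = 2) →
          rowVal π 2 p = natE (2 * t + 2)) ∧
        ((2 * t + 2) ∈ π.parts → ¬ Marked π (2 * t + 2) 2 →
          rowVal π 2 p = natE (2 * t + 4) ∧ startType π p = 3 ∧
          ∃ i, 1 ≤ i ∧ i ≤ p ∧
            nth π 2 i = 2 * t + 4 + 4 * (p - i) ∧
            (2 * t + 4 + 4 * (p - i) + 2) ∉ π.parts) }

/-- The first starting cluster index `p₁` of `π` (with `p₀ = p + 1`): the least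
`j ≥ 1` such that `π^{(2)}_j = π^{(2)}_p + 4(p - j)` and all of
`π^{(2)}_j, …, π^{(2)}_p` have the same starting type as `π^{(2)}_p`. -/
def firstCluster (π : Partition) (p : ℕ) : ℕ :=
  ((List.range' 1 p).filter fun j =>
    (List.range' j (p + 1 - j)).all fun i =>
      decide (nth π 2 i = nth π 2 p + 4 * (p - i)) &&
      decide (startType π i = startType π p)).headD p

/-- The set `ℰ(k,r)` of partitions in `C(k,r)` with no odd parts. -/
def E (k r : ℕ) : Set Partition :=
  { π | π ∈ C k r ∧ ∀ x ∈ π.parts, x % 2 = 0 }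

/-- `C_<(k,r|m) = ⋃_{p+t=m} C_<(k,r|p,t)`. -/
noncomputable def Cltm (k r m : ℕ) : Set Partition :=
  { π | ∃ p t, p + t = m ∧ π ∈ Clt k r p t }

/-- `C_=(k,r|m) = ⋃_{p+t=m} C_=(k,r|p,t)`. -/
noncomputable def Ceqm (k r m : ℕ) : Set Partition :=
  { π | ∃ p t, p + t = m ∧ π ∈ Ceq k r p t }

/-- `I_N`: partitions into distinct odd parts, each at least `2N + 1`. -/
def Iset (N : ℕ) : Set Partition :=
  { ζ | (∀ x ∈ ζ.parts, x % 2 = 1 ∧ 2 * N + 1 ≤ x) ∧ ζ.parts.Nodup }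

/-- `F(3,3)`: pairs `(π, ζ)` with `π ∈ ℰ(3,3)` and `ζ ∈ I_{N₂(π)}`. -/
noncomputable def F33 : Set (Partition × Partition) :=
  { pq | pq.1 ∈ E 3 3 ∧ pq.2 ∈ Iset (Nmk pq.1 2) }


section Infra
variable (π : Partition)

lemma mex1_pos (s : List ℕ) : 0 < mex1 s := (Nat.find_spec (exists_pos_not_mem s)).1

lemma mex1_not_mem (s : List ℕ) : mex1 s ∉ s := (Nat.find_spec (exists_pos_not_mem s)).2

lemma mex1_mem {s : List ℕ} {j : ℕ} (h0 : 0 < j) (hj : j < mex1 s) : j ∈ s := by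
  have := Nat.find_min (exists_pos_not_mem s) hj
  simp only [not_and, not_not] at this
  exact this h0

lemma conflict_refl_le {x y : ℕ} (h : y ≤ x) : conflict y x = true := by
  unfold conflict
  have : y - x = 0 := by omega
  split <;> simp [this]

lemma ggAux_map_fst : ∀ (rest : List ℕ) (acc : List (ℕ × ℕ)),
    (ggAux acc rest).map Prod.fst = rest.reverse ++ acc.map Prod.fst := by
  intro rest
  induction rest with
  | nil => intro acc; simp [ggAux]
  | cons p rest ih =>
    intro acc
    rw [ggAux, ih]
    simp

lemma ggMarks_map_fst : (ggMarks π).map Prod.fst = π.parts := by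
  rw [ggMarks, ggAux_map_fst]
  simp

/-- The greedy property of a marked list. -/
def GP (l : List (ℕ × ℕ)) : Prop :=
  ∀ pre a post, l = pre ++ a :: post →
    a.2 = mex1 ((post.filter fun q => conflict a.1 q.1).map Prod.snd)

lemma gp_ggAux : ∀ (rest : List ℕ) (acc : List (ℕ × ℕ)), GP acc → GP (ggAux acc rest) := by
  intro rest
  induction rest with
  | nil => intro acc h; exact h
  | cons p rest ih =>
    intro acc h
    rw [ggAux]
    apply ih
    intro pre a post hsplit
    match pre with
    | [] =>
      simp only [List.nil_append, List.cons.injEq] at hsplit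
      obtain ⟨rfl, rfl⟩ := hsplit
      rfl
    | b :: pre' =>
      simp only [List.cons_append, List.cons.injEq] at hsplit
      exact h pre' a post hsplit.2

lemma gp_ggMarks : GP (ggMarks π) := by
  apply gp_ggAux
  intro pre a post h
  exact absurd h (by simp)

lemma mark_pos {x m : ℕ} (h : Marked π x m) : 1 ≤ m := by
  obtain ⟨pre, post, hsplit⟩ := List.append_of_mem h
  have := gp_ggMarks π pre (x, m) post hsplit
  simp only at this
  rw [this]
  exact mex1_pos _

lemma marked_mem_parts {x m : ℕ} (h : Marked π x m) : x ∈ π.parts := by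
  rw [← ggMarks_map_fst]
  exact List.mem_map.mpr ⟨(x, m), h, rfl⟩

lemma exists_mark {x : ℕ} (h : x ∈ π.parts) : ∃ m, Marked π x m := by
  rw [← ggMarks_map_fst] at h
  obtain ⟨⟨y, m⟩, hm, rfl⟩ := List.mem_map.mp h
  exact ⟨m, hm⟩

lemma sorted_fst : ((ggMarks π).map Prod.fst).Pairwise (· ≥ ·) := by
  rw [ggMarks_map_fst]; exact π.sorted

lemma marks_ne {x mx y my : ℕ} (hx : Marked π x mx) (hy : Marked π y my)
    (hlt : y < x) (hc : conflict x y = true) : mx ≠ my := by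
  obtain ⟨pre, post, hsplit⟩ := List.append_of_mem hx
  have hgp := gp_ggMarks π pre (x, mx) post hsplit
  have hy' : (y, my) ∈ pre ∨ (y, my) ∈ post := by
    have := hy
    rw [Marked, hsplit] at this
    rcases List.mem_append.mp this with h | h
    · exact Or.inl h
    · rcases List.mem_cons.mp h with h | h
      · exact absurd h (by simp; omega)
      · exact Or.inr h
  rcases hy' with h | h
  · -- y in pre: contradicts sortedness
    exfalso
    have hs := sorted_fst π
    rw [hsplit] at hs
    simp only [List.map_append, List.map_cons] at hs
    have := (List.pairwise_append.mp hs).2.2 y (List.mem_map.mpr ⟨(y, my), h, rfl⟩)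
      x (by simp)
    omega
  · -- y in post: marks differ by mex property
    intro heq
    apply mex1_not_mem ((post.filter fun q => conflict x q.1).map Prod.snd)
    rw [← hgp, heq]
    exact List.mem_map.mpr ⟨(y, my), List.mem_filter.mpr ⟨h, hc⟩, rfl⟩

lemma mark_lower {x m : ℕ} (hx : Marked π x m) {j : ℕ} (h0 : 0 < j) (hj : j < m) :
    ∃ y, y ≤ x ∧ conflict x y = true ∧ Marked π y j := by
  obtain ⟨pre, post, hsplit⟩ := List.append_of_mem hx
  have hgp := gp_ggMarks π pre (x, m) post hsplit
  simp only at hgp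
  rw [hgp] at hj
  have hmem := mex1_mem h0 hj
  obtain ⟨⟨y, j'⟩, hq, hj'⟩ := List.mem_map.mp hmem
  obtain ⟨hqpost, hcq⟩ := List.mem_filter.mp hq
  simp only at hj' hcq
  refine ⟨y, ?_, hcq, ?_⟩
  · have hs := sorted_fst π
    rw [hsplit] at hs
    simp only [List.map_append, List.map_cons] at hs
    have := ((List.pairwise_append.mp hs).2.1)
    have := (List.pairwise_cons.mp this).1 y (List.mem_map.mpr ⟨(y, j'), hqpost, rfl⟩)
    exact this
  · rw [Marked, hsplit, ← hj']
    simp [hqpost]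

/-- The pairwise "distinct marks on conflicting parts" property of `ggMarks`. -/
lemma pairwiseR : (ggMarks π).Pairwise
    (fun a b => conflict a.1 b.1 = true → a.2 ≠ b.2) := by
  have h : ∀ l : List (ℕ × ℕ), GP l →
      l.Pairwise (fun a b => conflict a.1 b.1 = true → a.2 ≠ b.2) := by
    intro l
    induction l with
    | nil => intro _; exact List.Pairwise.nil
    | cons a l ih =>
      intro hgp
      refine List.Pairwise.cons ?_ (ih ?_)
      · intro b hb hc heq
        have := hgp [] a l rfl
        apply mex1_not_mem ((l.filter fun q => conflict a.1 q.1).map Prod.snd)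
        rw [← this, heq]
        exact List.mem_map.mpr ⟨b, List.mem_filter.mpr ⟨hb, hc⟩, rfl⟩
      · intro pre b post hsplit
        exact hgp (a :: pre) b post (by rw [hsplit]; rfl)
  exact h _ (gp_ggMarks π)

end Infra

section Rows
variable (π : Partition) (i : ℕ)

lemma mem_row_iff {x : ℕ} : x ∈ row π i ↔ Marked π x i := by
  simp only [row, List.mem_map, List.mem_filter]
  constructor
  · rintro ⟨⟨y, m⟩, ⟨hm, hbeq⟩, rfl⟩
    simp only [beq_iff_eq] at hbeq
    simpa [Marked, hbeq] using hm
  · intro h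
    exact ⟨(x, i), ⟨h, by simp⟩, rfl⟩

lemma row_pairwise_ge : (row π i).Pairwise (· ≥ ·) := by
  have h1 : ((ggMarks π).filter fun q => q.2 == i).Sublist (ggMarks π) :=
    List.filter_sublist
  exact List.Pairwise.sublist (h1.map Prod.fst) (sorted_fst π)

lemma row_noconf : (row π i).Pairwise (fun a b => conflict a b = false) := by
  have h1 := (pairwiseR π).sublist (List.filter_sublist (l := ggMarks π)
    (p := fun q => q.2 == i))
  rw [row, List.pairwise_map]
  refine h1.imp_of_mem ?_
  intro a b ha hb h
  have hai : a.2 = i := by simpa using (List.mem_filter.mp ha).2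
  have hbi : b.2 = i := by simpa using (List.mem_filter.mp hb).2
  by_contra hc
  exact h (by simpa using hc) (by rw [hai, hbi])

lemma nth_eq_getElem {j : ℕ} (h1 : 1 ≤ j) (h2 : j ≤ Nmk π i) :
    nth π i j = (row π i)[j - 1]'(by unfold Nmk at h2; omega) := by
  rw [nth, List.getD_eq_getElem]

lemma nth_marked {j : ℕ} (h1 : 1 ≤ j) (h2 : j ≤ Nmk π i) :
    Marked π (nth π i j) i := by
  rw [← mem_row_iff, nth_eq_getElem π i h1 h2]
  exact List.getElem_mem _

lemma nth_pos {j : ℕ} (h1 : 1 ≤ j) (h2 : j ≤ Nmk π i) : 0 < nth π i j :=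
  π.pos _ (marked_mem_parts π (nth_marked π i h1 h2))

lemma nth_eq_zero {j : ℕ} (h : Nmk π i < j) : nth π i j = 0 := by
  rw [nth, List.getD_eq_default]
  unfold Nmk at h; omega

lemma le_Nmk_of_nth_pos {j : ℕ} (h : 0 < nth π i j) : j ≤ Nmk π i := by
  by_contra hc
  rw [nth_eq_zero π i (by omega)] at h
  omega

lemma rowgap {j : ℕ} (h1 : 1 ≤ j) (h2 : j + 1 ≤ Nmk π i) :
    nth π i (j + 1) + 2 ≤ nth π i j ∧
      (nth π i j % 2 = 0 → nth π i (j + 1) + 3 ≤ nth π i j) := by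
  have hlen : j < (row π i).length := by unfold Nmk at h2; omega
  have hlt : j - 1 < j := by omega
  have hge := (List.pairwise_iff_getElem.mp (row_pairwise_ge π i)) (j - 1) j
    (by omega) hlen hlt
  have hnc := (List.pairwise_iff_getElem.mp (row_noconf π i)) (j - 1) j
    (by omega) hlen hlt
  rw [nth_eq_getElem π i h1 (by omega), nth_eq_getElem π i (by omega) h2]
  simp only [Nat.add_sub_cancel]
  set a := (row π i)[j - 1]
  set b := (row π i)[j]
  unfold conflict at hnc
  split at hnc
  · next hodd =>
    constructor
    · simp only [decide_eq_false_iff_not] at hnc; omega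
    · intro heven; omega
  · next heven =>
    simp only [decide_eq_false_iff_not] at hnc
    constructor <;> [omega; (intro _; omega)]

lemma nth_mono {a b : ℕ} (h1 : 1 ≤ a) (hab : a ≤ b) (hb : b ≤ Nmk π i) :
    nth π i b + 2 * (b - a) ≤ nth π i a := by
  induction b with
  | zero => omega
  | succ n ihn =>
    rcases Nat.eq_or_lt_of_le hab with heq | hlt
    · subst heq; simp
    · have hn : a ≤ n := by omega
      have hgap := (rowgap π i (by omega) hb).1
      have := ihn hn (by omega)
      omega

end Rows

section Vals

lemma natE_lt_iff {a b : ℕ} : natE a < natE b ↔ a < b := by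
  simp [natE]

lemma natE_le_iff {a b : ℕ} : natE a ≤ natE b ↔ a ≤ b := by
  simp [natE]

lemma natE_inj {a b : ℕ} (h : natE a = natE b) : a = b := by
  have := natE_le_iff.mp h.le
  have := natE_le_iff.mp h.ge
  omega

lemma bot_lt_natE (a : ℕ) : (⊥ : EReal) < natE a := by
  simp only [natE]
  exact EReal.bot_lt_coe _

lemma natE_lt_top (a : ℕ) : natE a < (⊤ : EReal) := by
  simp only [natE]
  exact EReal.coe_lt_top _

variable (π : Partition) (i : ℕ)

lemma rowVal_zero : rowVal π i 0 = ⊤ := by simp [rowVal]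

lemma rowVal_eq {j : ℕ} (h1 : 1 ≤ j) (h2 : j ≤ Nmk π i) :
    rowVal π i j = natE (nth π i j) := by
  rw [rowVal, if_neg (by omega), nth_eq_getElem π i h1 h2,
    List.getElem?_eq_getElem (by unfold Nmk at h2; omega)]

lemma rowVal_bot {j : ℕ} (h : Nmk π i < j) : rowVal π i j = ⊥ := by
  rw [rowVal, if_neg (by omega), List.getElem?_eq_none (by unfold Nmk at h; omega)]

end Vals

lemma bigL_ge (π : Partition) {b : ℕ} (hb : b ≤ Nmk π 2)
    (h : ∀ j, 1 ≤ j → j ≤ b → ∀ x ∈ π.parts, x % 2 = 1 → x < nth π 2 j) :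
    b ≤ bigL π := by
  rw [bigL]
  have hsum : Nmk π 2 - b + b = Nmk π 2 := by omega
  have hsplit : List.range' 1 (Nmk π 2) = List.range' 1 b ++ List.range' (1 + 1 * b) (Nmk π 2 - b) := by
    rw [List.range'_append, Nat.add_sub_of_le hb]
  rw [hsplit, List.filter_append, List.length_append]
  have : (List.range' 1 b).filter (fun j =>
      decide (∀ x ∈ π.parts, x % 2 = 1 → x < nth π 2 j)) = List.range' 1 b := by
    apply List.filter_eq_self.mpr
    intro j hj
    rw [List.mem_range'] at hj
    exact decide_eq_true (h j (by omega) (by omega))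
  rw [this]
  simp

section StartTypes
variable {π : Partition}

lemma conflict_even {x y : ℕ} (hx : x % 2 = 0) : conflict x y = true ↔ x - y ≤ 2 := by
  unfold conflict
  rw [if_neg (by omega)]
  simp

lemma st_one {b : ℕ} (h : startType π (b+1) = 1) :
    Marked π (nth π 2 (b+1) - 2) 1 := by
  rw [startType, startPair] at h
  simp only [] at h
  split_ifs at h with h1 h2 h3 h4 h5 <;> simp_all

/-- Key lemma for condition (3): a `2`-marked even part larger than all odd
parts by at least 3 has starting type 1, 2 or 3. -/
lemma typeC {b : ℕ} (hidx : b + 1 ≤ Nmk π 2)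
    (hveven : nth π 2 (b+1) % 2 = 0)
    (hodd : ∀ x ∈ π.parts, x % 2 = 1 → x + 3 ≤ nth π 2 (b+1))
    (hbig : b + 1 ≤ bigL π) :
    startType π (b+1) = 1 ∨ startType π (b+1) = 2 ∨ startType π (b+1) = 3 := by
  have hv2 : Marked π (nth π 2 (b+1)) 2 := nth_marked π 2 (by omega) hidx
  have hvpos : 0 < nth π 2 (b+1) := nth_pos π 2 (by omega) hidx
  have hnm1 : ¬ Marked π (nth π 2 (b+1) - 1) 1 := by
    intro h
    have := hodd _ (marked_mem_parts π h) (by omega)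
    omega
  have hnm1' : (nth π 2 (b+1) + 1) ∉ π.parts := by
    intro h
    have := hodd _ h (by omega)
    omega
  have hlow : Marked π (nth π 2 (b+1) - 2) 1 ∨ Marked π (nth π 2 (b+1)) 1 := by
    obtain ⟨y, hyx, hyc, hym⟩ := mark_lower π (j := 1) hv2 (by omega) (by omega)
    have hyr : nth π 2 (b+1) - y ≤ 2 := (conflict_even hveven).mp hyc
    have : y = nth π 2 (b+1) - 2 ∨ y = nth π 2 (b+1) - 1 ∨ y = nth π 2 (b+1) := by omega
    rcases this with rfl | rfl | rfl
    · exact Or.inl hym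
    · exact absurd hym hnm1
    · exact Or.inr hym
  have hbig' : ¬ bigL π < b + 1 := by omega
  rw [startType, startPair]
  simp only []
  rw [if_neg hbig']
  by_cases hb0 : b = 0
  · simp only [if_pos hb0]
    split_ifs with hA hB hC hD
    · exfalso
      simp only [Bool.and_eq_true, decide_eq_true_eq] at hA
      exact hnm1 hA.1
    · simp
    · simp
    · simp
    · exfalso
      simp only [Bool.and_eq_true, decide_eq_true_eq, Bool.not_eq_true',
        decide_eq_false_iff_not, not_and, not_not, Bool.not_eq_true,
        decide_eq_true_eq] at hA hB hC hD
      have hvm2 : Marked π (nth π 2 (b+1) - 2) 1 := hlow.resolve_right hD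
      have hmem : (nth π 2 (b+1) + 2) ∈ π.parts := hB hvm2
      obtain ⟨m2, hm2⟩ := exists_mark π hmem
      have hm2pos := mark_pos π hm2
      have hm2ne : m2 ≠ 1 := fun h => hC (h ▸ hm2)
      obtain ⟨y, hyx, hyc, hym⟩ := mark_lower π (j := 1) hm2 (by omega) (by omega)
      have hyr : nth π 2 (b+1) + 2 - y ≤ 2 :=
        (conflict_even (by omega) : conflict (nth π 2 (b+1)+2) y = true ↔ _).mp hyc
      have : y = nth π 2 (b+1) ∨ y = nth π 2 (b+1) + 1 ∨ y = nth π 2 (b+1) + 2 := by omega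
      rcases this with rfl | rfl | rfl
      · exact hD hym
      · exact hnm1' (marked_mem_parts π hym)
      · exact hC hym
  · simp only [if_neg hb0]
    split_ifs with hA hB hC hD
    · exfalso
      simp only [Bool.and_eq_true, decide_eq_true_eq] at hA
      exact hnm1 hA.1
    · simp
    · simp
    · simp
    · exfalso
      simp only [Bool.and_eq_true, decide_eq_true_eq, Bool.not_eq_true',
        decide_eq_false_iff_not, not_and, not_not, Bool.not_eq_true, Bool.or_eq_true,
        not_or, decide_eq_true_eq] at hA hB hC hD
      have hvm2 : Marked π (nth π 2 (b+1) - 2) 1 := hlow.resolve_right hD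
      tauto

/-- Key lemma for condition (4): if `π^{(2)}_{p+1} = 2t+2` where `2t+1` is the
largest odd part (with marks at most 2), then `π^{(2)}_{p+1}` has starting
type 0 or 1, given condition (5) of `C_=`. -/
lemma typeB {p t : ℕ} (hidx : p + 1 ≤ Nmk π 2)
    (ht : nth π 2 (p+1) = 2*t + 2)
    (hodd : ∀ x ∈ π.parts, x % 2 = 1 → x ≤ 2*t + 1)
    (h2t1 : (2*t + 1) ∈ π.parts)
    (hm2 : ∀ m, Marked π (2*t + 1) m → m ≤ 2)
    (hbig : p + 1 ≤ bigL π)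
    (hC5 : (∃ j, 1 ≤ j ∧ j ≤ Nmk π 2 ∧ nth π 2 j = 2*t + 2 ∧ startType π j = 2) →
      rowVal π 2 p = natE (2*t + 2)) :
    startType π (p+1) = 0 ∨ startType π (p+1) = 1 := by
  have hv2 : Marked π (2*t+2) 2 := ht ▸ nth_marked π 2 (by omega) hidx
  obtain ⟨m₁, hm₁⟩ := exists_mark π h2t1
  have hm₁pos := mark_pos π hm₁
  have hm₁le := hm2 _ hm₁
  have hconf : conflict (2*t+2) (2*t+1) = true := (conflict_even (by omega)).mpr (by omega)
  have hm₁ne : (2 : ℕ) ≠ m₁ := marks_ne π hv2 hm₁ (by omega) hconf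
  have hm₁1 : m₁ = 1 := by omega
  subst hm₁1
  have hn221 : ¬ Marked π (2*t+2) 1 := fun h => marks_ne π h hm₁ (by omega) hconf rfl
  have h2t3 : (2*t+3) ∉ π.parts := fun h => by have := hodd _ h (by omega); omega
  have hmain : startType π (p+1) = 0 ∨ startType π (p+1) = 1 ∨ startType π (p+1) = 2 := by
    have hbig' : ¬ bigL π < p + 1 := by omega
    rw [startType, startPair]
    simp only []
    rw [if_neg hbig', ht]
    have htm1 : 2*t + 2 - 1 = 2*t+1 := by omega
    have htm2 : 2*t + 2 - 2 = 2*t := by omega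
    rw [htm1, htm2]
    by_cases hb0 : p = 0
    · simp only [if_pos hb0]
      split_ifs with hA hB hC hD
      · simp
      · simp
      · simp
      · exfalso
        simp only [decide_eq_true_eq] at hD
        exact hn221 hD
      · exfalso
        simp only [Bool.and_eq_true, decide_eq_true_eq, Bool.not_eq_true',
          decide_eq_false_iff_not, not_and, not_not, Bool.not_eq_true,
          decide_eq_true_eq] at hA hB hC hD
        have hmem : (2*t+2+2) ∈ π.parts := hA hm₁
        obtain ⟨m2, hm2'⟩ := exists_mark π hmem
        have := mark_pos π hm2'
        have hm2ne : m2 ≠ 1 := fun h => hC (h ▸ hm2')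
        obtain ⟨y, hyx, hyc, hym⟩ := mark_lower π (j := 1) hm2' (by omega) (by omega)
        have hyr : 2*t+2+2 - y ≤ 2 :=
          (conflict_even (by omega) : conflict (2*t+2+2) y = true ↔ _).mp hyc
        have : y = 2*t+2 ∨ y = 2*t+3 ∨ y = 2*t+2+2 := by omega
        rcases this with rfl | rfl | rfl
        · exact hn221 hym
        · exact h2t3 (marked_mem_parts π hym)
        · exact hC hym
    · simp only [if_neg hb0]
      split_ifs with hA hB hC hD
      · simp
      · simp
      · simp
      · exfalso
        simp only [decide_eq_true_eq] at hD
        exact hn221 hD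
      · exfalso
        simp only [Bool.and_eq_true, decide_eq_true_eq, Bool.not_eq_true',
          decide_eq_false_iff_not, not_and, not_not, Bool.not_eq_true, Bool.or_eq_true,
          not_or, decide_eq_true_eq] at hA hB hC hD
        tauto
  rcases hmain with h | h | h
  · exact Or.inl h
  · exact Or.inr h
  · exfalso
    have := hC5 ⟨p+1, by omega, hidx, ht, h⟩
    by_cases hp0 : p = 0
    · subst hp0
      rw [rowVal_zero] at this
      exact absurd this.symm (natE_lt_top _).ne
    · rw [rowVal_eq π 2 (by omega) (by omega)] at this
      have hinj := natE_inj this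
      have hgap := (rowgap π 2 (by omega) hidx).1
      omega

end StartTypes

section Wrappers
variable {π : Partition}

lemma st_one' {j : ℕ} (h1 : 1 ≤ j) (h : startType π j = 1) :
    Marked π (nth π 2 j - 2) 1 := by
  obtain ⟨b, rfl⟩ : ∃ b, j = b + 1 := ⟨j - 1, by omega⟩
  exact st_one h

lemma typeC' {j : ℕ} (h1 : 1 ≤ j) (hidx : j ≤ Nmk π 2)
    (hveven : nth π 2 j % 2 = 0)
    (hodd : ∀ x ∈ π.parts, x % 2 = 1 → x + 3 ≤ nth π 2 j)
    (hbig : j ≤ bigL π) :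
    startType π j = 1 ∨ startType π j = 2 ∨ startType π j = 3 := by
  obtain ⟨b, rfl⟩ : ∃ b, j = b + 1 := ⟨j - 1, by omega⟩
  exact typeC hidx hveven hodd hbig

lemma conflict_odd' {t : ℕ} : conflict (2*t+1) (2*t) = true := by
  unfold conflict
  rw [if_pos (by omega)]
  exact decide_eq_true (by omega)

end Wrappers

/-- Theorem 5.7: for `π ∈ C_=(k,r|m)`, we have `π ∈ C_<(k,r|m')` if and only
if `m < m'`. -/
theorem Ceqm_mem_Cltm_iff (k r m m' : ℕ) (hrk : r ≤ k) (hr : 3 ≤ r)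
    (π : Partition) (hπ : π ∈ Ceqm k r m) :
    π ∈ Cltm k r m' ↔ m < m' := by
  classical
  obtain ⟨p, t, hpt, hCeq⟩ := hπ
  obtain ⟨hC, h2t1, hodd, hm2, hCp, hCp1, hC4, hC5, hC6⟩ := hCeq
  have hpN' : 1 ≤ p → p ≤ Nmk π 2 := by
    intro hp1
    by_contra h
    rw [rowVal_bot π 2 (by omega)] at hCp
    exact absurd hCp (bot_lt_natE _).not_ge
  constructor
  · rintro ⟨p', t', hpt', hC', hodd', h3, h4, h5, h6⟩
    have htt' : t < t' := by
      have := hodd' _ h2t1 (by omega)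
      omega
    by_contra hm'
    have hge : p' + t' ≤ p + t := by omega
    have hp1 : p' + (t' - t) ≤ p := by omega
    have hppos : 1 ≤ p := by omega
    have hpN : p ≤ Nmk π 2 := hpN' hppos
    have hnthp : 2*t+2 ≤ nth π 2 p := by
      rw [rowVal_eq π 2 hppos hpN] at hCp
      exact natE_le_iff.mp hCp
    have hp'1N : p' + 1 ≤ Nmk π 2 := by omega
    have h3' : nth π 2 (p'+1) ≤ 2*t' := by
      rw [rowVal_eq π 2 (by omega) hp'1N] at h3
      have := natE_lt_iff.mp h3
      omega
    have hmono := nth_mono π 2 (a := p'+1) (b := p) (by omega) (by omega) hpN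
    -- p = p' + (t' - t) exactly
    have hpeq : p = p' + (t' - t) := by omega
    by_cases hd : t' - t = 1
    · -- d = 1 : p = p' + 1
      have hpp' : p = p' + 1 := by omega
      have hnthp2 : nth π 2 p = 2*t + 2 := by omega
      have h2t'eq : 2*t' = 2*t + 2 := by omega
      have heq : rowVal π 2 (p'+1) = natE (2*t') := by
        rw [rowVal_eq π 2 (by omega) hp'1N]
        congr 1
        omega
      rcases h6 heq with h0 | h1
      · -- starting type 0 : contradiction with condition (4) of Ceq
        rw [← hpp'] at h0
        have := hC4 ⟨p, by omega, hpN, hnthp2, h0⟩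
        have hr := this.1
        by_cases hN : p + 1 ≤ Nmk π 2
        · rw [rowVal_eq π 2 (by omega) hN] at hr
          have hinj := natE_inj hr
          have hgap := (rowgap π 2 (by omega) hN).1
          omega
        · rw [rowVal_bot π 2 (by omega)] at hr
          exact absurd hr (bot_lt_natE _).ne
      · -- starting type 1 : 2t is 1-marked
        have hM2t : Marked π (2*t) 1 := by
          have := st_one h1
          rw [← hpp', hnthp2] at this
          simpa using this
        obtain ⟨m₁, hm₁⟩ := exists_mark π h2t1
        have hm₁pos := mark_pos π hm₁
        have hm₁le := hm2 _ hm₁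
        have hne1 : m₁ ≠ 1 := by
          intro h
          exact marks_ne π hm₁ hM2t (by omega) conflict_odd' (by omega)
        have hm₁2 : m₁ = 2 := by omega
        have hM2t2 : Marked π (2*t+2) 2 := hnthp2 ▸ nth_marked π 2 hppos hpN
        exact marks_ne π hM2t2 hm₁ (by omega)
          ((conflict_even (by omega)).mpr (by omega)) (by omega)
    · -- d ≥ 2 : contradiction via the parity gap
      have hd2 : 2 ≤ t' - t := by omega
      have hmono2 := nth_mono π 2 (a := p'+1) (b := p-1) (by omega) (by omega) (by omega)
      have hgap := rowgap π 2 (j := p - 1) (by omega) (by omega)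
      have hpp : p - 1 + 1 = p := by omega
      rw [hpp] at hgap
      have h1 : nth π 2 (p-1) = 2*t + 4 := by omega
      have := hgap.2 (by omega)
      omega
  · intro hm
    -- construct the split (p2, m' - p2)
    have hpm_pack : ∃ pm, pm ≤ p ∧ (pm = 0 ∨ 2*(m'-pm)+1 < nth π 2 pm) ∧
        (∀ q, pm < q → q ≤ p → nth π 2 q ≤ 2*(m'-q)+1) := by
      refine ⟨Nat.findGreatest (fun q => q = 0 ∨ 2*(m'-q)+1 < nth π 2 q) p,
        Nat.findGreatest_le p,
        Nat.findGreatest_spec (P := fun q => q = 0 ∨ 2*(m'-q)+1 < nth π 2 q)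
          (Nat.zero_le p) (Or.inl rfl), ?_⟩
      intro q h1 h2
      have := Nat.findGreatest_is_greatest h1 h2
      push_neg at this
      omega
    obtain ⟨pm, hpm_le, hpm_spec, hpm_max⟩ := hpm_pack
    have hQex : ∃ q, q ≤ pm ∧ ∀ j, q < j → j ≤ pm →
        (nth π 2 j = 2*(m'-j)+2 ∧ startType π j = 1) :=
      ⟨pm, le_rfl, fun j h1 h2 => absurd (h1.trans_le h2) (lt_irrefl _)⟩
    have hp2_pack : ∃ p2, (p2 ≤ pm ∧ ∀ j, p2 < j → j ≤ pm →
        (nth π 2 j = 2*(m'-j)+2 ∧ startType π j = 1)) ∧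
        (p2 = 0 ∨ ¬(nth π 2 p2 = 2*(m'-p2)+2 ∧ startType π p2 = 1)) := by
      refine ⟨Nat.find hQex, Nat.find_spec hQex, ?_⟩
      by_contra hcon
      push_neg at hcon
      obtain ⟨hne, hch⟩ := hcon
      refine Nat.find_min hQex (m := Nat.find hQex - 1) (by omega)
        ⟨by have := (Nat.find_spec hQex).1; omega, ?_⟩
      intro j h1 h2
      by_cases hj : j = Nat.find hQex
      · rw [hj]; exact hch
      · exact (Nat.find_spec hQex).2 j (by omega) h2
    obtain ⟨p2, ⟨hp2pm, hchain⟩, hstop⟩ := hp2_pack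
    have ht2 : t + 1 ≤ m' - p2 := by omega
    have hchainN : p2 < pm → p2 + 1 ≤ Nmk π 2 := by
      intro hlt
      exact le_trans (le_trans (by omega) hpm_le) (hpN' (by omega))
    refine ⟨p2, m' - p2, by omega, hC, ?_, ?_, ?_, ?_, ?_⟩
    · -- no odd part ≥ 2t₂+1
      intro x hx hxodd
      have := hodd x hx hxodd
      omega
    · -- rowVal (p2+1) < natE (2t₂+1)
      rcases lt_or_eq_of_le hp2pm with hlt | rfl
      · obtain ⟨hnthj, _⟩ := hchain (p2+1) (by omega) (by omega)
        rw [rowVal_eq π 2 (by omega) (hchainN hlt), hnthj]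
        exact natE_lt_iff.mpr (by omega)
      · by_cases hpmp : p2 < p
        · have hle := hpm_max (p2+1) (by omega) (by omega)
          have hidx : p2+1 ≤ Nmk π 2 := le_trans (by omega) (hpN' (by omega))
          rw [rowVal_eq π 2 (by omega) hidx]
          exact natE_lt_iff.mpr (by omega)
        · have hpm_p : p2 = p := by omega
          rw [hpm_p]
          exact lt_of_le_of_lt hCp1 (natE_lt_iff.mpr (by omega))
    · -- natE (2t₂+1) < rowVal p2
      rcases Nat.eq_zero_or_pos p2 with h0 | hpos
      · rw [h0, rowVal_zero]
        exact natE_lt_top _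
      · rcases lt_or_eq_of_le hp2pm with hlt | rfl
        · obtain ⟨hnthj, _⟩ := hchain (p2+1) (by omega) (by omega)
          have hidx1 := hchainN hlt
          have hgap := (rowgap π 2 (j := p2) (by omega) hidx1).1
          rw [rowVal_eq π 2 (by omega) (by omega)]
          exact natE_lt_iff.mpr (by omega)
        · rcases hpm_spec with h0' | hlt'
          · exact absurd h0' (by omega)
          · have hidx : p2 ≤ Nmk π 2 := le_Nmk_of_nth_pos π 2 (by omega)
            rw [rowVal_eq π 2 (by omega) hidx]
            exact natE_lt_iff.mpr (by omega)
    · -- condition (3) of C_<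
      intro h
      have hp2pos : 1 ≤ p2 := by
        by_contra h0
        rw [show p2 = 0 by omega, rowVal_zero] at h
        exact (natE_lt_top _).ne' h
      have hidx : p2 ≤ Nmk π 2 := by
        by_contra hc
        rw [rowVal_bot π 2 (by omega)] at h
        exact (bot_lt_natE _).ne h
      rw [rowVal_eq π 2 hp2pos hidx] at h
      have hnth : nth π 2 p2 = 2*(m'-p2)+2 := natE_inj h
      have hne1 : startType π p2 ≠ 1 := by
        rcases hstop with h0 | hstop'
        · omega
        · intro hty
          exact hstop' ⟨hnth, hty⟩
      have hbig : p2 ≤ bigL π := by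
        apply bigL_ge π hidx
        intro j hj1 hj2 x hx hxodd
        have hmono := nth_mono π 2 hj1 hj2 hidx
        have := hodd x hx hxodd
        omega
      rcases typeC' hp2pos hidx (by omega)
        (fun x hx hxo => by have := hodd x hx hxo; omega) hbig with h1 | h2 | h3
      · exact absurd h1 hne1
      · exact Or.inl h2
      · exact Or.inr h3
    · -- condition (4) of C_<
      intro h
      rcases lt_or_eq_of_le hp2pm with hlt | rfl
      · exact Or.inr (hchain (p2+1) (by omega) (by omega)).2
      · by_cases hpmp : p2 < p
        · exfalso
          have hle := hpm_max (p2+1) (by omega) (by omega)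
          have hidx : p2+1 ≤ Nmk π 2 := le_trans (by omega) (hpN' (by omega))
          rw [rowVal_eq π 2 (by omega) hidx] at h
          have := natE_inj h
          omega
        · have hpm_p : p2 = p := by omega
          subst hpm_p
          have hidx : p2+1 ≤ Nmk π 2 := by
            by_contra hc
            rw [rowVal_bot π 2 (by omega)] at h
            exact (bot_lt_natE _).ne h
          rw [rowVal_eq π 2 (by omega) hidx] at h
          have hnth : nth π 2 (p2+1) = 2*(m'-p2) := natE_inj h
          have hle2 : nth π 2 (p2+1) ≤ 2*t+2 := by
            rw [rowVal_eq π 2 (by omega) hidx] at hCp1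
            exact natE_le_iff.mp hCp1
          have hnth' : nth π 2 (p2+1) = 2*t+2 := by omega
          have hbig : p2 + 1 ≤ bigL π := by
            apply bigL_ge π hidx
            intro j hj1 hj2 x hx hxodd
            have hmono := nth_mono π 2 hj1 hj2 hidx
            have := hodd x hx hxodd
            omega
          exact typeB hidx hnth' hodd h2t1 hm2 hbig hC5



end Bressoud
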